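/- Let H be a real Hilbert space and p > 1. The map g : H → H defined by g(x) = ‖x‖^{p−2} x for x ≠ 0 and g(0) = 0 (the Gateaux derivative of x ↦ (1/p)‖x‖^p) is uniformly continuous on every bounded subset of H. -/
import Mathlib


open Filter
open scoped RealInnerProductSpace

theorem stmt_18
    {H : Type*} [NormedAddCommGroup H] [InnerProductSpace ℝ H]
    (p : ℝ) (hp : 1 < p) (g : H → H)
    (hg0 : g 0 = 0) (hg : ∀ x : H, x ≠ 0 → g x = ‖x‖ ^ (p - 2) • x) :
    ∀ B : Set H, Bornology.IsBounded B → ∀ ε > 0, ∃ η > 0,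
      ∀ x ∈ B, ∀ y ∈ B, ‖x - y‖ < η → ‖g x - g y‖ < ε := by
  intro B hB ε hε
  have hp1 : (0:ℝ) < p - 1 := by linarith
  obtain ⟨R₀, hR₀⟩ := hB.subset_closedBall 0
  set R : ℝ := max R₀ 1 with hRdef
  have hR1 : (1:ℝ) ≤ R := le_max_right _ _
  have hRpos : (0:ℝ) < R := lt_of_lt_of_le one_pos hR1
  have hBR : ∀ x ∈ B, ‖x‖ ≤ R := by
    intro x hx
    have := hR₀ hx
    simp only [Metric.mem_closedBall, dist_zero_right] at this
    exact this.trans (le_max_left _ _)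
  -- small radius r with r^(p-1) ≤ ε/4
  set r : ℝ := min 1 ((ε/4) ^ (1/(p-1))) with hrdef
  have hrpos : 0 < r := lt_min one_pos (Real.rpow_pos_of_pos (by positivity) _)
  have hrε : r ^ (p-1) ≤ ε/4 := by
    have h1 : r ≤ (ε/4) ^ (1/(p-1)) := min_le_right _ _
    have h2 : r ^ (p-1) ≤ ((ε/4) ^ (1/(p-1))) ^ (p-1) :=
      Real.rpow_le_rpow hrpos.le h1 hp1.le
    calc r ^ (p-1) ≤ ((ε/4) ^ (1/(p-1))) ^ (p-1) := h2
      _ = (ε/4) ^ ((1/(p-1)) * (p-1)) := by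
          rw [← Real.rpow_mul (by positivity)]
      _ = ε/4 := by
          rw [one_div_mul_cancel (ne_of_gt hp1), Real.rpow_one]
  -- norm of g
  have hgnorm : ∀ x : H, ‖g x‖ = ‖x‖ ^ (p-1) := by
    intro x
    by_cases hx : x = 0
    · simp [hx, hg0, Real.zero_rpow (ne_of_gt hp1)]
    · rw [hg x hx, norm_smul, Real.norm_eq_abs,
        abs_of_nonneg (Real.rpow_nonneg (norm_nonneg x) _)]
      have hxpos : (0:ℝ) < ‖x‖ := norm_pos_iff.mpr hx
      rw [show p - 1 = (p-2) + 1 by ring, Real.rpow_add hxpos, Real.rpow_one]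
  set c : ℝ := r/2 with hcdef
  have hcpos : 0 < c := by positivity
  set M : ℝ := c ^ (p-2) + R ^ (p-2) with hMdef
  have hMpos : 0 < M := by positivity
  -- F bounded by M on [c, R]
  have hFbd : ∀ t : ℝ, c ≤ t → t ≤ R → t ^ (p-2) ≤ M := by
    intro t h1 h2
    rcases le_or_gt p 2 with hple | hplt
    · have : t ^ (p-2) ≤ c ^ (p-2) :=
        Real.rpow_le_rpow_of_nonpos hcpos h1 (by linarith)
      have h0 : (0:ℝ) ≤ R ^ (p-2) := Real.rpow_nonneg hRpos.le _
      linarith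
    · have : t ^ (p-2) ≤ R ^ (p-2) :=
        Real.rpow_le_rpow (le_trans hcpos.le h1) h2 (by linarith)
      have h0 : (0:ℝ) ≤ c ^ (p-2) := Real.rpow_nonneg hcpos.le _
      linarith
  -- uniform continuity of F on [c, R]
  have hFc : ContinuousOn (fun t : ℝ => t ^ (p-2)) (Set.Icc c R) := by
    intro t ht
    have htpos : t ≠ 0 := ne_of_gt (lt_of_lt_of_le hcpos ht.1)
    exact (Real.continuousAt_rpow_const t _ (Or.inl htpos)).continuousWithinAt
  have hUC := isCompact_Icc.uniformContinuousOn_of_continuous hFc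
  rw [Metric.uniformContinuousOn_iff] at hUC
  obtain ⟨δ, hδpos, hδ⟩ := hUC (ε/(2*(R+1))) (by positivity)
  refine ⟨min (min c δ) (ε/(2*(M+1))), by positivity, ?_⟩
  intro x hx y hy hxy
  have hηc : ‖x - y‖ < c := lt_of_lt_of_le hxy (le_trans (min_le_left _ _) (min_le_left _ _))
  have hηδ : ‖x - y‖ < δ := lt_of_lt_of_le hxy (le_trans (min_le_left _ _) (min_le_right _ _))
  have hηM : ‖x - y‖ < ε/(2*(M+1)) := lt_of_lt_of_le hxy (min_le_right _ _)
  by_cases hcase : ‖x‖ ≤ r ∧ ‖y‖ ≤ r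
  · -- both small
    have bx : ‖g x‖ ≤ ε/4 := by
      rw [hgnorm]
      exact le_trans (Real.rpow_le_rpow (norm_nonneg x) hcase.1 hp1.le) hrε
    have by' : ‖g y‖ ≤ ε/4 := by
      rw [hgnorm]
      exact le_trans (Real.rpow_le_rpow (norm_nonneg y) hcase.2 hp1.le) hrε
    calc ‖g x - g y‖ ≤ ‖g x‖ + ‖g y‖ := norm_sub_le _ _
      _ ≤ ε/4 + ε/4 := add_le_add bx by'
      _ < ε := by linarith
  · -- one of the norms exceeds r, so both are ≥ c
    push_neg at hcase
    have hxc : c ≤ ‖x‖ ∧ c ≤ ‖y‖ := by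
      rcases le_or_gt ‖x‖ r with h | h
      · have h2 := hcase h
        have hy2 : c ≤ ‖y‖ := by
          have : r ≤ ‖y‖ := h2.le
          linarith [hcpos]
        have hx2 : c ≤ ‖x‖ := by
          have h5 : ‖y‖ - ‖x‖ ≤ ‖x - y‖ := by
            have h3 := abs_norm_sub_norm_le y x
            rw [norm_sub_rev] at h3
            exact (le_abs_self _).trans h3
          have hrc : r - c = c := by rw [hcdef]; ring
          linarith [hηc]
        exact ⟨hx2, hy2⟩
      · have hx2 : c ≤ ‖x‖ := by linarith [hcpos]
        have hy2 : c ≤ ‖y‖ := by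
          have h5 : ‖x‖ - ‖y‖ ≤ ‖x - y‖ := by
            calc ‖x‖ - ‖y‖ ≤ |‖x‖ - ‖y‖| := le_abs_self _
              _ ≤ ‖x - y‖ := abs_norm_sub_norm_le x y
          have hrc : r - c = c := by rw [hcdef]; ring
          linarith [hηc]
        exact ⟨hx2, hy2⟩
    obtain ⟨hxc', hyc'⟩ := hxc
    have hxne : x ≠ 0 := by
      intro h; rw [h, norm_zero] at hxc'; linarith
    have hyne : y ≠ 0 := by
      intro h; rw [h, norm_zero] at hyc'; linarith
    have hxR : ‖x‖ ≤ R := hBR x hx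
    have hyR : ‖y‖ ≤ R := hBR y hy
    -- decomposition
    have hdecomp : g x - g y = (‖x‖ ^ (p-2) - ‖y‖ ^ (p-2)) • x + ‖y‖ ^ (p-2) • (x - y) := by
      rw [hg x hxne, hg y hyne]
      module
    have hbound : ‖g x - g y‖ ≤ |‖x‖ ^ (p-2) - ‖y‖ ^ (p-2)| * ‖x‖ + |‖y‖ ^ (p-2)| * ‖x - y‖ := by
      rw [hdecomp]
      calc ‖(‖x‖ ^ (p-2) - ‖y‖ ^ (p-2)) • x + ‖y‖ ^ (p-2) • (x - y)‖
          ≤ ‖(‖x‖ ^ (p-2) - ‖y‖ ^ (p-2)) • x‖ + ‖‖y‖ ^ (p-2) • (x - y)‖ := norm_add_le _ _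
        _ = |‖x‖ ^ (p-2) - ‖y‖ ^ (p-2)| * ‖x‖ + |‖y‖ ^ (p-2)| * ‖x - y‖ := by
            rw [norm_smul, norm_smul, Real.norm_eq_abs, Real.norm_eq_abs]
    -- term 1
    have hmem1 : ‖x‖ ∈ Set.Icc c R := ⟨hxc', hxR⟩
    have hmem2 : ‖y‖ ∈ Set.Icc c R := ⟨hyc', hyR⟩
    have hdistn : dist ‖x‖ ‖y‖ < δ := by
      rw [Real.dist_eq]
      exact lt_of_le_of_lt (abs_norm_sub_norm_le x y) hηδ
    have hF := hδ ‖x‖ hmem1 ‖y‖ hmem2 hdistn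
    rw [Real.dist_eq] at hF
    have ht1 : |‖x‖ ^ (p-2) - ‖y‖ ^ (p-2)| * ‖x‖ ≤ (ε/(2*(R+1))) * R := by
      apply mul_le_mul hF.le hxR (norm_nonneg x) (by positivity)
    have ht1' : (ε/(2*(R+1))) * R < ε/2 := by
      rw [div_mul_eq_mul_div, div_lt_div_iff₀ (by positivity) two_pos]
      nlinarith
    -- term 2
    have hFyM : |‖y‖ ^ (p-2)| ≤ M := by
      rw [abs_of_nonneg (Real.rpow_nonneg (norm_nonneg y) _)]
      exact hFbd ‖y‖ hyc' hyR
    have ht2 : |‖y‖ ^ (p-2)| * ‖x - y‖ ≤ M * (ε/(2*(M+1))) := by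
      apply mul_le_mul hFyM hηM.le (norm_nonneg _) hMpos.le
    have ht2' : M * (ε/(2*(M+1))) < ε/2 := by
      have heq : M * (ε/(2*(M+1))) = ε * M / (2*(M+1)) := by ring
      rw [heq, div_lt_div_iff₀ (by positivity) two_pos]
      nlinarith
    calc ‖g x - g y‖ ≤ |‖x‖ ^ (p-2) - ‖y‖ ^ (p-2)| * ‖x‖ + |‖y‖ ^ (p-2)| * ‖x - y‖ := hbound
      _ < ε/2 + ε/2 := by
          apply add_lt_add_of_lt_of_le (lt_of_le_of_lt ht1 ht1') (le_of_lt (lt_of_le_of_lt ht2 ht2'))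
      _ = ε := by ring
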